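/- Let A = [[0,1,0],[−1,0,−1],[0,1,0]] and let T = 7π/(4√2). Then exp(T·A) applied to the vector (1/2, −1/√2, 1/2) equals (1/√2, 0, 1/√2). -/

import Mathlib

open Matrix Real

lemma exp_mulVec_eigen {n : Type*} [Fintype n] [DecidableEq n]
    (M : Matrix n n ℂ) (x : n → ℂ) (c : ℂ) (h : M.mulVec x = c • x) :
    (NormedSpace.exp M).mulVec x = Complex.exp c • x := by
  letI : SeminormedRing (Matrix n n ℂ) := Matrix.linftyOpSemiNormedRing
  letI : NormedRing (Matrix n n ℂ) := Matrix.linftyOpNormedRing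
  letI : NormedAlgebra ℂ (Matrix n n ℂ) := Matrix.linftyOpNormedAlgebra
  have hpow : ∀ k : ℕ, (M ^ k).mulVec x = c ^ k • x := by
    intro k
    induction k with
    | zero => simp [Matrix.one_mulVec]
    | succ k ih =>
      rw [pow_succ, ← Matrix.mulVec_mulVec, h, Matrix.mulVec_smul, ih, pow_succ,
        smul_smul]
      rw [mul_comm]
  let L : Matrix n n ℂ →L[ℂ] (n → ℂ) :=
    LinearMap.toContinuousLinearMap
      { toFun := fun N => N.mulVec x
        map_add' := fun N₁ N₂ => Matrix.add_mulVec N₁ N₂ x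
        map_smul' := fun a N => Matrix.smul_mulVec a N x }
  have hL : ∀ N, L N = N.mulVec x := fun N => rfl
  have hs : Summable fun k : ℕ => ((k.factorial : ℂ))⁻¹ • M ^ k := NormedSpace.expSeries_summable' M
  have h1 : (NormedSpace.exp M).mulVec x = ∑' k : ℕ, ((k.factorial : ℂ))⁻¹ • (M ^ k).mulVec x := by
    rw [← hL, NormedSpace.exp_eq_tsum ℂ]
    rw [L.map_tsum hs]
    exact tsum_congr fun k => by rw [_root_.map_smul, hL]
  have hsc : Summable fun k : ℕ => ((k.factorial : ℂ))⁻¹ * c ^ k := by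
    simpa [smul_eq_mul] using NormedSpace.expSeries_summable' (𝕂 := ℂ) (𝔸 := ℂ) c
  rw [h1]
  have h2 : ∀ k : ℕ, ((k.factorial : ℂ))⁻¹ • (M ^ k).mulVec x = (((k.factorial : ℂ))⁻¹ * c ^ k) • x := by
    intro k; rw [hpow, smul_smul]
  simp_rw [h2]
  rw [Summable.tsum_smul_const hsc]
  congr 1
  rw [Complex.exp_eq_exp_ℂ, NormedSpace.exp_eq_tsum ℂ]
  exact (tsum_congr fun k => by rw [smul_eq_mul]).symm

set_option maxHeartbeats 1000000 in
theorem first_move :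
    (NormedSpace.exp ((7 * Real.pi / (4 * Real.sqrt 2)) •
        (!![0, 1, 0; -1, 0, -1; 0, 1, 0] : Matrix (Fin 3) (Fin 3) ℝ))).mulVec
      ![1/2, -(1 / Real.sqrt 2), 1/2] = ![1 / Real.sqrt 2, 0, 1 / Real.sqrt 2] := by
  letI : SeminormedRing (Matrix (Fin 3) (Fin 3) ℝ) := Matrix.linftyOpSemiNormedRing
  letI : NormedRing (Matrix (Fin 3) (Fin 3) ℝ) := Matrix.linftyOpNormedRing
  letI : NormedAlgebra ℝ (Matrix (Fin 3) (Fin 3) ℝ) := Matrix.linftyOpNormedAlgebra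
  letI : SeminormedRing (Matrix (Fin 3) (Fin 3) ℂ) := Matrix.linftyOpSemiNormedRing
  letI : NormedRing (Matrix (Fin 3) (Fin 3) ℂ) := Matrix.linftyOpNormedRing
  letI : NormedAlgebra ℝ (Matrix (Fin 3) (Fin 3) ℂ) := Matrix.linftyOpNormedAlgebra
  letI : NormedAlgebra ℂ (Matrix (Fin 3) (Fin 3) ℂ) := Matrix.linftyOpNormedAlgebra
  set s : ℂ := ((Real.sqrt 2 : ℝ) : ℂ) with hs_def
  have hs2 : s * s = 2 := by
    rw [hs_def, ← Complex.ofReal_mul, Real.mul_self_sqrt (by norm_num : (0:ℝ) ≤ 2)]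
    norm_num
  have hs0 : s ≠ 0 := by
    intro h
    rw [h, zero_mul] at hs2
    norm_num at hs2
  set t : ℝ := 7 * Real.pi / (4 * Real.sqrt 2) with ht_def
  set A : Matrix (Fin 3) (Fin 3) ℝ := !![0, 1, 0; -1, 0, -1; 0, 1, 0] with hA_def
  set Ac : Matrix (Fin 3) (Fin 3) ℂ := !![0, 1, 0; -1, 0, -1; 0, 1, 0] with hAc_def
  set θ : ℝ := 7 * Real.pi / 4 with hθ_def
  have hts : (t : ℂ) * (s * Complex.I) = (θ : ℝ) * Complex.I := by
    have h1 : (t : ℝ) * Real.sqrt 2 = θ := by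
      rw [ht_def, hθ_def]
      field_simp
    rw [← mul_assoc, hs_def, ← Complex.ofReal_mul, h1]
  -- the complexified matrix
  set Bc : Matrix (Fin 3) (Fin 3) ℂ := (t : ℂ) • Ac with hBc_def
  -- eigenvectors
  set e : Fin 3 → ℂ := ![(1 + Complex.I)/2, (-1 + Complex.I)/s, (1 + Complex.I)/2] with he_def
  set f : Fin 3 → ℂ := ![(1 - Complex.I)/2, (-1 - Complex.I)/s, (1 - Complex.I)/2] with hf_def
  have hAe : Ac.mulVec e = (s * Complex.I) • e := by
    funext i
    fin_cases i
    · simp [hAc_def, he_def, Matrix.mulVec, dotProduct, Fin.sum_univ_three]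
      field_simp
      linear_combination (-Complex.I - Complex.I^2) * hs2 + (-2) * Complex.I_sq
    · simp [hAc_def, he_def, Matrix.mulVec, dotProduct, Fin.sum_univ_three]
      field_simp
      linear_combination (-2) * Complex.I_sq
    · simp [hAc_def, he_def, Matrix.mulVec, dotProduct, Fin.sum_univ_three]
      field_simp
      linear_combination (-Complex.I - Complex.I^2) * hs2 + (-2) * Complex.I_sq
  have hAf : Ac.mulVec f = (-(s * Complex.I)) • f := by
    funext i
    fin_cases i
    · simp [hAc_def, hf_def, Matrix.mulVec, dotProduct, Fin.sum_univ_three]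
      field_simp
      linear_combination (Complex.I - Complex.I^2) * hs2 + (-2) * Complex.I_sq
    · simp [hAc_def, hf_def, Matrix.mulVec, dotProduct, Fin.sum_univ_three]
      field_simp
      linear_combination (-2) * Complex.I_sq
    · simp [hAc_def, hf_def, Matrix.mulVec, dotProduct, Fin.sum_univ_three]
      field_simp
      linear_combination (Complex.I - Complex.I^2) * hs2 + (-2) * Complex.I_sq
  have hBe : Bc.mulVec e = ((θ : ℝ) * Complex.I) • e := by
    rw [hBc_def, Matrix.smul_mulVec, hAe, smul_smul, hts]
  have hBf : Bc.mulVec f = (-((θ : ℝ) * Complex.I)) • f := by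
    rw [hBc_def, Matrix.smul_mulVec, hAf, smul_smul, mul_neg, hts]
  have hee := exp_mulVec_eigen Bc e _ hBe
  have hff := exp_mulVec_eigen Bc f _ hBf
  -- trig values
  have hcos : Real.cos θ = Real.sqrt 2 / 2 := by
    have : θ = 2 * Real.pi - Real.pi / 4 := by rw [hθ_def]; ring
    rw [this, Real.cos_sub, Real.cos_two_pi, Real.sin_two_pi, Real.cos_pi_div_four]
    ring
  have hsin : Real.sin θ = -(Real.sqrt 2 / 2) := by
    have : θ = 2 * Real.pi - Real.pi / 4 := by rw [hθ_def]; ring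
    rw [this, Real.sin_sub, Real.cos_two_pi, Real.sin_two_pi, Real.sin_pi_div_four]
    ring
  have hexp1 : Complex.exp ((θ : ℝ) * Complex.I) = s/2 - s/2 * Complex.I := by
    rw [Complex.exp_mul_I, ← Complex.ofReal_cos, ← Complex.ofReal_sin, hcos, hsin]
    push_cast [hs_def]
    ring
  have hexp2 : Complex.exp (-((θ : ℝ) * Complex.I)) = s/2 + s/2 * Complex.I := by
    rw [show -((θ : ℝ) * Complex.I) = ((-θ : ℝ) : ℂ) * Complex.I by push_cast; ring]
    rw [Complex.exp_mul_I, ← Complex.ofReal_cos, ← Complex.ofReal_sin,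
      Real.cos_neg, Real.sin_neg, hcos, hsin]
    push_cast [hs_def]
    ring
  -- decomposition of the vector
  set vc : Fin 3 → ℂ := ![1/2, -(1/s), 1/2] with hvc_def
  have hdecomp : vc = (1/2 : ℂ) • e + (1/2 : ℂ) • f := by
    funext i
    fin_cases i <;>
      simp [hvc_def, he_def, hf_def] <;>
      field_simp <;> ring
  have hmainC : (NormedSpace.exp Bc).mulVec vc = ![1/s, 0, 1/s] := by
    rw [hdecomp, Matrix.mulVec_add, Matrix.mulVec_smul, Matrix.mulVec_smul, hee, hff,
      hexp1, hexp2]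
    funext i
    fin_cases i
    · simp [he_def, hf_def]
      field_simp
      linear_combination (2 - 2*Complex.I^2) * hs2 + (-4) * Complex.I_sq
    · simp [he_def, hf_def]
      field_simp
      linear_combination (-2) * Complex.I_sq
    · simp [he_def, hf_def]
      field_simp
      linear_combination (2 - 2*Complex.I^2) * hs2 + (-4) * Complex.I_sq
  -- transfer back to ℝ
  have hmap : ((NormedSpace.exp (t • A)).map (algebraMap ℝ ℂ)) = NormedSpace.exp Bc := by
    have hcont : Continuous ((Algebra.ofId ℝ ℂ).mapMatrix :
        Matrix (Fin 3) (Fin 3) ℝ →ₐ[ℝ] Matrix (Fin 3) (Fin 3) ℂ) :=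
      LinearMap.continuous_of_finiteDimensional
        ((Algebra.ofId ℝ ℂ).mapMatrix.toLinearMap)
    letI : NormedAlgebra ℚ (Matrix (Fin 3) (Fin 3) ℝ) := Matrix.linftyOpNormedAlgebra
    have h1 := NormedSpace.map_exp
      ((Algebra.ofId ℝ ℂ).mapMatrix :
        Matrix (Fin 3) (Fin 3) ℝ →ₐ[ℝ] Matrix (Fin 3) (Fin 3) ℂ) hcont (t • A)
    have h2 : ((Algebra.ofId ℝ ℂ).mapMatrix (t • A) : Matrix (Fin 3) (Fin 3) ℂ) = Bc := by
      rw [hBc_def, hA_def, hAc_def]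
      ext i j
      fin_cases i <;> fin_cases j <;>
        simp [Algebra.ofId_apply, Matrix.map_apply, Algebra.algebraMap_eq_smul_one]
    calc ((NormedSpace.exp (t • A)).map (algebraMap ℝ ℂ))
        = (Algebra.ofId ℝ ℂ).mapMatrix (NormedSpace.exp (t • A)) := rfl
      _ = NormedSpace.exp Bc := h1.trans (congrArg _ h2)
      _ = NormedSpace.exp Bc := rfl
  funext i
  apply Complex.ofReal_injective
  have hbridge : ∀ (N : Matrix (Fin 3) (Fin 3) ℝ) (w : Fin 3 → ℝ) (i : Fin 3),
      ((N.mulVec w i : ℝ) : ℂ) = (N.map (algebraMap ℝ ℂ)).mulVec (fun j => ((w j : ℝ) : ℂ)) i := by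
    intro N w i
    simp [Matrix.mulVec, dotProduct, Matrix.map_apply]
  rw [hbridge, hmap]
  have hvz : (fun j => ((![1/2, -(1 / Real.sqrt 2), 1/2] : Fin 3 → ℝ) j : ℂ)) = vc := by
    funext j
    fin_cases j <;> simp [hvc_def, hs_def]
  rw [show (7 * Real.pi / (4 * Real.sqrt 2)) = t from ht_def.symm] at *
  rw [hvz, hmainC]
  fin_cases i <;> simp [hs_def]
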